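/- Let G be a simply connected Lie group and U ⊆ G an open connected subset containing 1. If g₁, …, gₙ ∈ U are such that their product g = g₁ * g₂ * ⋯ * gₙ lies in U, then the U-words (g₁, …, gₙ) and (g) are equivalent. -/

import Mathlib

/-- Elementary contraction of a word over `U`: two adjacent letters `a, b ∈ U` are replaced
by the single letter `a * b`, provided `a * b ∈ U`. -/
def Contracts {G : Type*} [Group G] (U : Set G) (w w' : List G) : Prop :=
  ∃ (l₁ l₂ : List G) (a b : G), a ∈ U ∧ b ∈ U ∧ a * b ∈ U ∧
    w = l₁ ++ a :: b :: l₂ ∧ w' = l₁ ++ (a * b) :: l₂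

/-- Elementary expansion: the inverse operation of contraction. -/
def Expands {G : Type*} [Group G] (U : Set G) (w w' : List G) : Prop :=
  Contracts U w' w

/-- Two `U`-words are equivalent if one is obtained from the other by a finite sequence of
elementary expansions and contractions. -/
def WordEquiv {G : Type*} [Group G] (U : Set G) : List G → List G → Prop :=
  Relation.ReflTransGen (fun w w' => Contracts U w w' ∨ Expands U w w')

namespace WEP

variable {G : Type*} [Group G] {U : Set G}

theorem wordEquiv_refl (w : List G) : WordEquiv U w w := Relation.ReflTransGen.refl

theorem wordEquiv_symm {w w' : List G} (h : WordEquiv U w w') : WordEquiv U w' w := by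
  have hs : Std.Symm (fun w w' : List G => Contracts U w w' ∨ Expands U w w') := by
    constructor
    intro a b hab
    exact hab.symm
  exact Relation.ReflTransGen.symmetric.symm _ _ h

theorem wordEquiv_trans {w₁ w₂ w₃ : List G} (h : WordEquiv U w₁ w₂) (h' : WordEquiv U w₂ w₃) :
    WordEquiv U w₁ w₃ := Relation.ReflTransGen.trans h h'

theorem contracts_append {w w' x y : List G} (h : Contracts U w w') :
    Contracts U (x ++ w ++ y) (x ++ w' ++ y) := by
  obtain ⟨l₁, l₂, a, b, ha, hb, hab, hw, hw'⟩ := h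
  exact ⟨x ++ l₁, l₂ ++ y, a, b, ha, hb, hab, by simp [hw], by simp [hw']⟩

theorem wordEquiv_of_contracts {w w' : List G} (h : Contracts U w w') : WordEquiv U w w' :=
  Relation.ReflTransGen.single (Or.inl h)

theorem wordEquiv_of_expands {w w' : List G} (h : Contracts U w' w) : WordEquiv U w w' :=
  Relation.ReflTransGen.single (Or.inr h)

theorem wordEquiv_append_congr {w₁ w₁' w₂ w₂' : List G} (h₁ : WordEquiv U w₁ w₁')
    (h₂ : WordEquiv U w₂ w₂') : WordEquiv U (w₁ ++ w₂) (w₁' ++ w₂') := by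
  have step : ∀ (x y : List G), WordEquiv U x y → ∀ u v : List G,
      WordEquiv U (u ++ x ++ v) (u ++ y ++ v) := by
    intro x y h u v
    induction h with
    | refl => exact wordEquiv_refl _
    | tail _ hstep ih =>
      refine wordEquiv_trans ih ?_
      rcases hstep with hc | hc
      · exact wordEquiv_of_contracts (contracts_append hc)
      · exact wordEquiv_of_expands (contracts_append hc)
  have e1 : WordEquiv U (w₁ ++ w₂) (w₁' ++ w₂) := by
    simpa using step w₁ w₁' h₁ [] w₂
  have e2 : WordEquiv U (w₁' ++ w₂) (w₁' ++ w₂') := by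
    simpa using step w₂ w₂' h₂ w₁' []
  exact wordEquiv_trans e1 e2

/-- A word whose letters are in `U` and all of whose nonempty prefix products are in `U`
is equivalent to the one-letter word given by its product. -/
theorem wordEquiv_of_prefix_prods : ∀ (n : ℕ) (l : List G), l.length = n → l ≠ [] →
    (∀ x ∈ l, x ∈ U) → (∀ k, (l.take (k+1)).prod ∈ U) →
    WordEquiv U l [l.prod] := by
  intro n
  induction n with
  | zero => intro l hn hne _ _; rw [List.length_eq_zero_iff] at hn; exact absurd hn hne
  | succ n ih =>
    intro l hn hne hmem hpre
    match l with
    | [a] => simpa using wordEquiv_refl [a]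
    | a :: b :: t' =>
      have ha : a ∈ U := hmem a (by simp)
      have hb : b ∈ U := hmem b (by simp)
      have hab : a * b ∈ U := by have := hpre 1; simpa using this
      have hc : Contracts U (a :: b :: t') ((a*b) :: t') :=
        ⟨[], t', a, b, ha, hb, hab, by simp, by simp⟩
      refine wordEquiv_trans (wordEquiv_of_contracts hc) ?_
      have hmem' : ∀ x ∈ (a*b) :: t', x ∈ U := by
        intro x hx
        rcases List.mem_cons.mp hx with h | h
        · exact h ▸ hab
        · exact hmem x (by simp [h])
      have hpre' : ∀ k, (((a*b) :: t').take (k+1)).prod ∈ U := by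
        intro k
        have := hpre (k+1)
        simpa [List.take, mul_assoc] using this
      have hlen : ((a*b) :: t').length = n := by simpa using hn
      have := ih ((a*b) :: t') hlen (by simp) hmem' hpre'
      simpa [mul_assoc] using this

theorem exists_fine {X : Type*} [MetricSpace X] [CompactSpace X] {Y : Type*}
    [TopologicalSpace Y] (F : X × X → Y) (hF : Continuous F) {V : Set Y} (hV : IsOpen V)
    (hdiag : ∀ x, F (x, x) ∈ V) :
    ∃ δ > 0, ∀ x y : X, dist x y < δ → F (x, y) ∈ V := by
  have hK : IsCompact ((fun x : X => (x, x)) '' Set.univ) :=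
    (isCompact_univ).image (continuous_id.prodMk continuous_id)
  have hsub : ((fun x : X => (x, x)) '' Set.univ) ⊆ F ⁻¹' V := by
    rintro - ⟨x, -, rfl⟩; exact hdiag x
  obtain ⟨δ, hδpos, hδ⟩ := hK.exists_thickening_subset_open (hV.preimage hF) hsub
  refine ⟨δ, hδpos, fun x y hxy => ?_⟩
  have : (x, y) ∈ Metric.thickening δ ((fun x : X => (x, x)) '' Set.univ) := by
    rw [Metric.mem_thickening_iff]
    refine ⟨(x, x), ⟨x, Set.mem_univ x, rfl⟩, ?_⟩
    rw [Prod.dist_eq]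
    simp only [dist_self]
    exact max_lt hδpos (by simpa [dist_comm] using hxy)
  exact hδ this

theorem prod_ratio (f : ℕ → G) (n : ℕ) :
    ((List.range n).map (fun j => (f j)⁻¹ * f (j+1))).prod = (f 0)⁻¹ * f n := by
  induction n with
  | zero => simp
  | succ n ih => rw [List.range_succ]; simp [ih, mul_assoc]

/-- The word of ratios of `φ` sampled at `j/d`, `j = 0, …, n`. -/
noncomputable def wordN (φ : ℝ → G) (d n : ℕ) : List G :=
  (List.range n).map (fun j : ℕ => (φ (j / d))⁻¹ * φ ((j+1) / d))

theorem wordN_prod (φ : ℝ → G) (d n : ℕ) :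
    (wordN φ d n).prod = (φ 0)⁻¹ * φ (n / d) := by
  induction n with
  | zero => simp [wordN]
  | succ n ih =>
    rw [wordN, List.range_succ, List.map_append, List.prod_append]
    rw [wordN] at ih
    rw [ih]
    push_cast
    simp [mul_assoc]

theorem wordN_length (φ : ℝ → G) (d n : ℕ) : (wordN φ d n).length = n := by
  simp [wordN]

/-- Stripping a leading `1` from a word. -/
theorem wordEquiv_one_cons (h1 : (1:G) ∈ U) (a : G) (ha : a ∈ U) (t : List G) :
    WordEquiv U ((1:G) :: a :: t) (a :: t) := by
  have hc : Contracts U ((1:G) :: a :: t) ((1 * a) :: t) :=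
    ⟨[], t, 1, a, h1, ha, by simpa using ha, by simp, by simp⟩
  simpa using wordEquiv_of_contracts hc

/-- Stripping a trailing `1` from a word. -/
theorem wordEquiv_append_one (h1 : (1:G) ∈ U) (a : G) (ha : a ∈ U) (t : List G) :
    WordEquiv U ((t ++ [a]) ++ [(1:G)]) (t ++ [a]) := by
  have hc : Contracts U ((t ++ [a]) ++ [(1:G)]) (t ++ [a * 1]) :=
    ⟨t, [], a, 1, ha, h1, by simpa using ha, by simp, by simp⟩
  simpa using wordEquiv_of_contracts hc

/-- The staircase lemma: two rows of ratios joined by connectors are equivalent words. -/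
theorem stair (h1 : (1:G) ∈ U) (n : ℕ) (hn : n ≠ 0) (r r' c : ℕ → G)
    (hr : ∀ j < n, r j ∈ U) (hr' : ∀ j < n, r' j ∈ U)
    (hc : ∀ m ≤ n, c m ∈ U)
    (hcr : ∀ m < n, c m * r m ∈ U)
    (heq : ∀ m < n, c m * r m = r' m * c (m+1))
    (hc0 : c 0 = 1) (hcn : c n = 1) :
    WordEquiv U ((List.range n).map r) ((List.range n).map r') := by
  set u : ℕ → List G := fun m =>
    ((List.range m).map r') ++ c m :: ((List.range (n - m)).map (fun i => r (m + i))) with hu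
  have hstep : ∀ m < n, WordEquiv U (u m) (u (m+1)) := by
    intro m hm
    have hsplit : (List.range (n - m)).map (fun i => r (m + i))
        = r m :: (List.range (n - (m+1))).map (fun i => r ((m+1) + i)) := by
      have h1' : n - m = (n - (m+1)) + 1 := by omega
      rw [h1', List.range_succ_eq_map, List.map_cons, List.map_map]
      refine congrArg₂ List.cons (by norm_num) ?_
      refine List.map_congr_left ?_
      intro a _
      simp only [Function.comp_apply]
      congr 1
      omega
    have hum : u m = ((List.range m).map r') ++ c m :: r m ::
        ((List.range (n - (m+1))).map (fun i => r ((m+1) + i))) := by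
      rw [hu]; simp only []; rw [hsplit]
    have hu1 : u (m+1) = (((List.range m).map r') ++ [r' m]) ++ c (m+1) ::
        ((List.range (n - (m+1))).map (fun i => r ((m+1) + i))) := by
      rw [hu]; simp only []; rw [List.range_succ, List.map_append]; simp
    have e1 : Contracts U (u m)
        (((List.range m).map r') ++ (c m * r m) :: ((List.range (n - (m+1))).map (fun i => r ((m+1) + i)))) := by
      refine ⟨(List.range m).map r', _, c m, r m, hc m (le_of_lt hm), hr m hm, hcr m hm, hum, rfl⟩
    have e2 : Contracts U (u (m+1))
        (((List.range m).map r') ++ (c m * r m) :: ((List.range (n - (m+1))).map (fun i => r ((m+1) + i)))) := by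
      refine ⟨(List.range m).map r', (List.range (n - (m+1))).map (fun i => r ((m+1) + i)),
        r' m, c (m+1), hr' m hm, hc (m+1) hm, ?_, ?_, ?_⟩
      · rw [← heq m hm]; exact hcr m hm
      · rw [hu1]; simp
      · rw [← heq m hm]
    exact wordEquiv_trans (wordEquiv_of_contracts e1) (wordEquiv_of_expands e2)
  have hchain : ∀ m ≤ n, WordEquiv U (u 0) (u m) := by
    intro m
    induction m with
    | zero => intro _; exact wordEquiv_refl _
    | succ m ih => intro hm; exact wordEquiv_trans (ih (by omega)) (hstep m (by omega))
  have h0 : WordEquiv U (u 0) ((List.range n).map r) := by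
    have : u 0 = (1:G) :: (List.range n).map r := by
      simp [hu, hc0]
    rw [this]
    obtain ⟨n', rfl⟩ : ∃ n', n = n' + 1 := ⟨n - 1, by omega⟩
    rw [List.range_succ_eq_map, List.map_cons]
    exact wordEquiv_one_cons h1 (r 0) (hr 0 (by omega)) _
  have hn' : WordEquiv U (u n) ((List.range n).map r') := by
    have : u n = ((List.range n).map r') ++ [(1:G)] := by
      simp [hu, hcn]
    rw [this]
    obtain ⟨n', rfl⟩ : ∃ n', n = n' + 1 := ⟨n - 1, by omega⟩
    rw [List.range_succ, List.map_append]
    exact wordEquiv_append_one h1 (r' n') (hr' n' (by omega)) _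
  exact wordEquiv_trans (wordEquiv_symm h0) (wordEquiv_trans (hchain n le_rfl) hn')

/-- Contract the word of ratios of `φ` to the single letter `φ (n/d)`,
provided all sampled points lie in `U`. -/
theorem wordN_equiv_singleton (φ : ℝ → G) (d n : ℕ) (hn : n ≠ 0) (hφ0 : φ 0 = 1)
    (hmem : ∀ x ∈ wordN φ d n, x ∈ U) (hin : ∀ j : ℕ, j ≤ n → φ (j / d) ∈ U) :
    WordEquiv U (wordN φ d n) [φ (n / d)] := by
  have hne : wordN φ d n ≠ [] := by
    simp [wordN, List.map_eq_nil_iff, List.range_eq_nil, hn]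
  have hpre : ∀ k, ((wordN φ d n).take (k+1)).prod ∈ U := by
    intro k
    have ht : (wordN φ d n).take (k+1) = wordN φ d (min (k+1) n) := by
      rw [wordN, ← List.map_take, List.take_range]; rfl
    rw [ht, wordN_prod, hφ0, inv_one, one_mul]
    exact hin _ (min_le_right _ _)
  have := wordEquiv_of_prefix_prods (wordN φ d n).length (wordN φ d n) rfl hne hmem hpre
  rwa [wordN_prod, hφ0, inv_one, one_mul] at this

/-- Concatenation of "segments": each segment `φ` is traversed on `[0,1]`,
translated by the value accumulated so far. -/
def chain : List (ℝ → G) → ℝ → G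
  | [] => fun _ => 1
  | φ :: Ψ => fun t => φ t * chain Ψ (t - 1)

theorem chain_nonpos (Ψ : List (ℝ → G)) (h : ∀ φ ∈ Ψ, ∀ t ≤ 0, φ t = 1) :
    ∀ t ≤ 0, chain Ψ t = 1 := by
  induction Ψ with
  | nil => intro t _; rfl
  | cons φ Ψ ih =>
    intro t ht
    have h1 : φ t = 1 := h φ (by simp) t ht
    have h2 : chain Ψ (t - 1) = 1 := ih (fun ψ hψ => h ψ (by simp [hψ])) _ (by linarith)
    simp [chain, h1, h2]

theorem chain_continuous {G : Type*} [Group G] [TopologicalSpace G] [IsTopologicalGroup G]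
    (Ψ : List (ℝ → G)) (h : ∀ φ ∈ Ψ, Continuous φ) : Continuous (chain Ψ) := by
  induction Ψ with
  | nil => exact continuous_const
  | cons φ Ψ ih =>
    exact (h φ (by simp)).mul
      ((ih (fun ψ hψ => h ψ (by simp [hψ]))).comp (continuous_id.sub continuous_const))

theorem chain_of_ge (Ψ : List (ℝ → G)) (h : ∀ φ ∈ Ψ, ∀ t ≥ 1, φ t = φ 1) :
    ∀ t : ℝ, (Ψ.length : ℝ) ≤ t → chain Ψ t = (Ψ.map (fun φ => φ 1)).prod := by
  induction Ψ with
  | nil => intro t _; rfl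
  | cons φ Ψ ih =>
    intro t ht
    simp only [List.length_cons] at ht
    push_cast at ht
    have h1 : φ t = φ 1 := h φ (by simp) t (by have := Ψ.length.cast_nonneg (α := ℝ); linarith)
    have h2 : chain Ψ (t - 1) = (Ψ.map (fun φ => φ 1)).prod :=
      ih (fun ψ hψ => h ψ (by simp [hψ])) _ (by linarith)
    simp [chain, h1, h2]

/-- Decomposition of the word of a chain: the first `n` letters form the word of the first
segment, the rest the word of the chain of the remaining segments. -/
theorem wordN_chain_cons (φ : ℝ → G) (Ψ : List (ℝ → G)) (n : ℕ) (hn : n ≠ 0)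
    (hΨ0 : ∀ ψ ∈ Ψ, ∀ t ≤ 0, ψ t = 1) (hφ1 : ∀ t ≥ 1, φ t = φ 1) :
    wordN (chain (φ :: Ψ)) n (n * (Ψ.length + 1))
      = wordN φ n n ++ wordN (chain Ψ) n (n * Ψ.length) := by
  have hnn : (0:ℝ) < n := by positivity
  have hrange : n * (Ψ.length + 1) = n + n * Ψ.length := by ring
  rw [wordN, hrange, List.range_add, List.map_append]
  congr 1
  · -- first block
    rw [wordN]
    refine List.map_congr_left ?_
    intro j hj
    rw [List.mem_range] at hj
    have key : ∀ i : ℕ, i ≤ n → chain (φ :: Ψ) (i / n) = φ (i / n) := by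
      intro i hi
      have : chain Ψ ((i:ℝ) / n - 1) = 1 := by
        refine chain_nonpos Ψ hΨ0 _ ?_
        rw [sub_nonpos, div_le_one hnn]
        exact_mod_cast hi
      simp [chain, this]
    have e1 := key j (le_of_lt hj)
    have e2 := key (j+1) hj
    push_cast at e1 e2 ⊢
    rw [e1, e2]
  · -- second block
    rw [wordN, List.map_map]
    refine List.map_congr_left ?_
    intro j hj
    rw [List.mem_range] at hj
    have key : ∀ i : ℕ, chain (φ :: Ψ) ((n + i : ℕ) / n) = φ 1 * chain Ψ (i / n) := by
      intro i
      have h1 : ((n + i : ℕ) : ℝ) / n ≥ 1 := by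
        rw [ge_iff_le, le_div_iff₀ hnn]
        push_cast
        linarith [Nat.cast_nonneg (α := ℝ) i]
      have h2 : ((n + i : ℕ) : ℝ) / n - 1 = (i : ℝ) / n := by
        push_cast
        field_simp
        ring
      show φ (((n + i : ℕ) : ℝ) / n) * chain Ψ (((n + i : ℕ) : ℝ) / n - 1) = _
      rw [hφ1 _ h1, h2]
    have e1 := key j
    have e2 := key (j + 1)
    have c1 : ((n + j : ℕ) : ℝ) = (n : ℝ) + j := by push_cast; ring
    have c2 : ((n + (j+1) : ℕ) : ℝ) = (n : ℝ) + (j : ℝ) + 1 := by push_cast; ring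
    have c3 : ((j+1 : ℕ) : ℝ) = (j : ℝ) + 1 := by push_cast; ring
    rw [c1] at e1
    rw [c2, c3] at e2
    simp only [Function.comp_apply]
    push_cast
    rw [e1, e2]
    simp [mul_assoc]

theorem word_equiv_chain (h1U : (1:G) ∈ U) (Ψ : List (ℝ → G)) (n : ℕ) (hn : n ≠ 0)
    (hΨ0 : ∀ ψ ∈ Ψ, ∀ t ≤ 0, ψ t = 1)
    (hΨ1 : ∀ ψ ∈ Ψ, ∀ t ≥ 1, ψ t = ψ 1)
    (hctr : ∀ ψ ∈ Ψ, WordEquiv U [ψ 1] (wordN ψ n n)) :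
    WordEquiv U (Ψ.map (fun ψ => ψ 1)) (wordN (chain Ψ) n (n * Ψ.length)) := by
  induction Ψ with
  | nil => simp [wordN]; exact wordEquiv_refl []
  | cons φ Ψ ih =>
    have hdec := wordN_chain_cons φ Ψ n hn (fun ψ hψ => hΨ0 ψ (by simp [hψ]))
      (hΨ1 φ (by simp))
    rw [List.length_cons, hdec, List.map_cons]
    have h1 : WordEquiv U [φ 1] (wordN φ n n) := hctr φ (by simp)
    have h2 : WordEquiv U (Ψ.map (fun ψ => ψ 1)) (wordN (chain Ψ) n (n * Ψ.length)) :=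
      ih (fun ψ hψ => hΨ0 ψ (by simp [hψ])) (fun ψ hψ => hΨ1 ψ (by simp [hψ]))
        (fun ψ hψ => hctr ψ (by simp [hψ]))
    have := wordEquiv_append_congr h1 h2
    simpa using this

section Homotopy

variable [TopologicalSpace G] [IsTopologicalGroup G]

/-- Clamping to the unit interval. -/
noncomputable def pr : ℝ → unitInterval := Set.projIcc 0 1 zero_le_one

theorem pr_dist (s t : ℝ) : dist (pr s) (pr t) ≤ dist s t := by
  have := (LipschitzWith.projIcc (a := (0:ℝ)) (b := 1) zero_le_one).dist_le_mul s t
  simpa [pr] using this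

theorem pr_zero : pr 0 = 0 := by
  simp [pr, Set.projIcc_left]

theorem pr_one : pr 1 = 1 := by
  simp [pr, Set.projIcc_right]

variable {x y : G} {p q : Path x y}

theorem homotopy_fine (F : p.Homotopy q) (hU : IsOpen U) (h1U : (1:G) ∈ U) :
    ∃ δ > 0, ∀ s t s' t' : ℝ, |s - s'| < δ → |t - t'| < δ →
      (F (pr s, pr t))⁻¹ * F (pr s', pr t') ∈ U := by
  obtain ⟨δ, hδ, hfine⟩ := exists_fine (X := unitInterval × unitInterval)
    (fun z : (unitInterval × unitInterval) × (unitInterval × unitInterval) =>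
      (F z.1)⁻¹ * F z.2)
    (((F.continuous.comp continuous_fst).inv).mul (F.continuous.comp continuous_snd))
    hU (by simp [h1U])
  refine ⟨δ, hδ, fun s t s' t' h1 h2 => hfine _ _ ?_⟩
  rw [Prod.dist_eq]
  refine max_lt (lt_of_le_of_lt (pr_dist _ _) ?_) (lt_of_le_of_lt (pr_dist _ _) ?_)
  · rwa [Real.dist_eq]
  · rwa [Real.dist_eq]

theorem homotopy_rows (F : p.Homotopy q) (hU : IsOpen U) (h1U : (1:G) ∈ U) :
    ∃ N₀ : ℕ, ∀ N ≥ N₀, N ≠ 0 →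
      WordEquiv U (wordN p.extend N N) (wordN q.extend N N)
      ∧ (∀ w ∈ wordN q.extend N N, w ∈ U) := by
  obtain ⟨δ, hδ, hfine⟩ := homotopy_fine F hU h1U
  refine ⟨⌈1/δ⌉₊ + 1, fun N hN hN0 => ?_⟩
  have hNpos : (0:ℝ) < N := by positivity
  have hNδ : 1 / (N:ℝ) < δ := by
    rw [div_lt_iff₀ hNpos]
    have h1 : (1:ℝ)/δ < (⌈1/δ⌉₊ + 1 : ℕ) := by
      push_cast
      exact lt_of_le_of_lt (Nat.le_ceil _) (by linarith)
    have h2 : ((⌈1/δ⌉₊ + 1 : ℕ) : ℝ) ≤ N := by exact_mod_cast hN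
    have : (1:ℝ)/δ < N := lt_of_lt_of_le h1 h2
    calc (1:ℝ) = δ * (1/δ) := by field_simp
    _ < δ * N := by exact mul_lt_mul_of_pos_left this hδ
  have hgap : ∀ u : ℝ, |u / N - (u+1) / N| < δ := by
    intro u
    rw [div_sub_div_same, show u - (u+1) = -1 by ring]
    rw [abs_div, abs_neg, abs_one, abs_of_pos hNpos]
    exact hNδ
  have hgap' : ∀ u : ℝ, |(u+1) / N - u / N| < δ := by
    intro u
    rw [abs_sub_comm]; exact hgap u
  set Φ : ℝ → ℝ → G := fun s t => F (pr s, pr t) with hΦ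
  -- letters of any row are in U
  have hletters : ∀ s : ℝ, ∀ w ∈ wordN (Φ s) N N, w ∈ U := by
    intro s w hw
    rw [wordN, List.mem_map] at hw
    obtain ⟨j, _, rfl⟩ := hw
    exact hfine s (j/N) s (((j:ℝ)+1)/N) (by simpa using hδ) (hgap j)
  -- identification of the extreme rows
  have hrow0 : Φ 0 = p.extend := by
    funext t
    show F (pr 0, pr t) = p.extend t
    rw [pr_zero, F.apply_zero]
    rfl
  have hrowN : Φ ((N:ℝ)/N) = q.extend := by
    funext t
    show F (pr ((N:ℝ)/N), pr t) = q.extend t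
    rw [div_self (ne_of_gt hNpos), pr_one, F.apply_one]
    rfl
  -- one staircase step between adjacent rows
  have hstep : ∀ s s' : ℝ, |s - s'| < δ →
      WordEquiv U (wordN (Φ s) N N) (wordN (Φ s') N N) := by
    intro s s' hss
    have hss' : |s' - s| < δ := by rwa [abs_sub_comm]
    set r : ℕ → G := fun j => (Φ s (j/N))⁻¹ * Φ s ((j+1)/N) with hr
    set r' : ℕ → G := fun j => (Φ s' (j/N))⁻¹ * Φ s' ((j+1)/N) with hr'
    set c : ℕ → G := fun m => (Φ s' (m/N))⁻¹ * Φ s (m/N) with hc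
    have hwr : wordN (Φ s) N N = (List.range N).map r := rfl
    have hwr' : wordN (Φ s') N N = (List.range N).map r' := rfl
    rw [hwr, hwr']
    refine stair h1U N hN0 r r' c ?_ ?_ ?_ ?_ ?_ ?_ ?_
    · intro j _; exact hfine s (j/N) s (((j:ℝ)+1)/N) (by simpa using hδ) (hgap j)
    · intro j _; exact hfine s' (j/N) s' (((j:ℝ)+1)/N) (by simpa using hδ) (hgap j)
    · intro m _; exact hfine s' (m/N) s (m/N) hss' (by simpa using hδ)
    · intro m _
      have e : c m * r m = (Φ s' ((m:ℝ)/N))⁻¹ * Φ s (((m:ℝ)+1)/N) := by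
        show ((Φ s' ((m:ℝ)/N))⁻¹ * Φ s ((m:ℝ)/N)) * ((Φ s ((m:ℝ)/N))⁻¹ * Φ s (((m:ℝ)+1)/N)) = _
        group
      rw [e]
      exact hfine s' ((m:ℝ)/N) s (((m:ℝ)+1)/N) hss' (hgap m)
    · intro m _
      show ((Φ s' ((m:ℝ)/N))⁻¹ * Φ s ((m:ℝ)/N)) * ((Φ s ((m:ℝ)/N))⁻¹ * Φ s (((m:ℝ)+1)/N))
          = ((Φ s' ((m:ℝ)/N))⁻¹ * Φ s' (((m:ℝ)+1)/N))
            * ((Φ s' (((m+1:ℕ):ℝ)/N))⁻¹ * Φ s (((m+1:ℕ):ℝ)/N))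
      rw [show ((m+1 : ℕ) : ℝ) = (m:ℝ)+1 by push_cast; ring]
      group
    · show (Φ s' ((0:ℕ)/N))⁻¹ * Φ s ((0:ℕ)/N) = 1
      have h0 : ((0:ℕ):ℝ)/N = 0 := by simp
      rw [h0]
      show (F (pr s', pr 0))⁻¹ * F (pr s, pr 0) = 1
      rw [pr_zero, F.source, F.source, inv_mul_cancel]
    · show (Φ s' ((N:ℕ)/N))⁻¹ * Φ s ((N:ℕ)/N) = 1
      have h0 : ((N:ℕ):ℝ)/N = 1 := div_self (ne_of_gt hNpos)
      rw [h0]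
      show (F (pr s', pr 1))⁻¹ * F (pr s, pr 1) = 1
      rw [pr_one, F.target, F.target, inv_mul_cancel]
  -- chain the rows
  have hrows : ∀ k : ℕ, k ≤ N → WordEquiv U (wordN (Φ 0) N N) (wordN (Φ ((k:ℝ)/N)) N N) := by
    intro k
    induction k with
    | zero =>
      intro _
      rw [show ((0:ℕ):ℝ)/N = 0 by simp]
      exact wordEquiv_refl _
    | succ k ih =>
      intro hk
      refine wordEquiv_trans (ih (by omega)) ?_
      have hcast : ((k+1 : ℕ) : ℝ) = (k:ℝ) + 1 := by push_cast; ring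
      rw [hcast]
      exact hstep ((k:ℝ)/N) (((k:ℝ)+1)/N) (hgap k)
  constructor
  · have := hrows N le_rfl
    rwa [hrow0, hrowN] at this
  · rw [← hrowN]; exact hletters _

end Homotopy

end WEP

section LPC

open Set

/-- A topological group which is a charted space over a model with corners is locally
path-connected: some point has arbitrarily small path-connected neighborhoods (coming from
balls around an interior point of the model's target), and homogeneity spreads this
everywhere. -/
theorem lpc_of_chartedSpace {E : Type*} [NormedAddCommGroup E] [NormedSpace ℝ E]
    {H : Type*} [TopologicalSpace H] (I : ModelWithCorners ℝ E H)
    {G : Type*} [TopologicalSpace G] [ChartedSpace H G] [Group G] [IsTopologicalGroup G] :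
    LocallyPathConnectedSpace G := by
  classical
  set e := chartAt H (1 : G) with he
  have h1src : (1:G) ∈ e.source := mem_chart_source H 1
  set h₀ := e 1 with hh₀
  have hh₀t : h₀ ∈ e.target := e.map_source h1src
  set x₀ := I h₀ with hx₀
  -- I '' e.target is a neighborhood of x₀ within range I
  have hmem : I '' e.target ∈ nhdsWithin x₀ (range I) := by
    rw [← I.map_nhds_eq h₀]
    exact Filter.image_mem_map (e.open_target.mem_nhds hh₀t)
  obtain ⟨W, hWopen, hWx₀, hWsub⟩ := mem_nhdsWithin.mp hmem
  -- find an interior point of the target inside W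
  have hx₀cl : x₀ ∈ closure (interior I.target) :=
    by rw [I.target_eq]; exact I.range_subset_closure_interior (mem_range_self h₀)
  obtain ⟨y₀, hy₀⟩ : (W ∩ interior I.target).Nonempty := by
    rcases mem_closure_iff.mp hx₀cl W hWopen hWx₀ with ⟨y, hy⟩
    exact ⟨y, hy⟩
  have hy₀W : y₀ ∈ W := hy₀.1
  have hy₀int : y₀ ∈ interior I.target := hy₀.2
  set B := interior I.target ∩ W with hB
  have hBopen : IsOpen B := isOpen_interior.inter hWopen
  have hy₀B : y₀ ∈ B := ⟨hy₀int, hy₀W⟩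
  have hBsub : B ⊆ I '' e.target := by
    intro z hz
    exact hWsub ⟨hz.2, by rw [← I.target_eq]; exact interior_subset hz.1⟩
  -- the local parametrization and its inverse
  set ψ : E → G := fun z => e.symm (I.symm z) with hψ
  set φ : G → E := fun g => I (e g) with hφ
  have hmapsto : ∀ z ∈ B, I.symm z ∈ e.target := by
    intro z hz
    obtain ⟨h, hh, rfl⟩ := hBsub hz
    rw [I.left_inv]
    exact hh
  have hψcont : ContinuousOn ψ B :=
    e.continuousOn_symm.comp I.continuous_symm.continuousOn hmapsto
  have hψφ : ∀ w ∈ e.source, ψ (φ w) = w := by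
    intro w hw
    rw [hψ, hφ]
    simp only [I.left_inv]
    exact e.left_inv hw
  have hφψ : ∀ z ∈ B, φ (ψ z) = z := by
    intro z hz
    obtain ⟨h, hh, rfl⟩ := hBsub hz
    rw [hψ, hφ]
    simp only [I.left_inv]
    rw [e.right_inv hh]
  set g₀ : G := ψ y₀ with hg₀
  have hg₀src : g₀ ∈ e.source := e.map_target (hmapsto y₀ hy₀B)
  have hφg₀ : φ g₀ = y₀ := hφψ y₀ hy₀B
  have hφcont : ContinuousOn φ e.source := I.continuous.comp_continuousOn e.continuousOn
  -- conclude using the pathComponentIn criterion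
  rw [locPathConnectedSpace_iff_pathComponentIn_mem_nhds]
  intro g u hu hgu
  set τ : G ≃ₜ G := Homeomorph.mulLeft (g * g₀⁻¹) with hτ
  have hτg₀ : τ g₀ = g := by simp [hτ, mul_assoc]
  set u' : Set G := τ ⁻¹' u with hu'
  have hu'open : IsOpen u' := hu.preimage τ.continuous
  have hg₀u' : g₀ ∈ u' := by
    rw [hu', mem_preimage, hτg₀]; exact hgu
  -- find a ball around y₀ mapped into u' by ψ
  have hcA : ContinuousAt ψ y₀ := hψcont.continuousAt (hBopen.mem_nhds hy₀B)
  have hpre : ψ ⁻¹' u' ∈ nhds y₀ := hcA.preimage_mem_nhds (hu'open.mem_nhds hg₀u')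
  obtain ⟨r, hrpos, hball⟩ := Metric.mem_nhds_iff.mp
    (Filter.inter_mem hpre (hBopen.mem_nhds hy₀B))
  set S : Set G := ψ '' Metric.ball y₀ r with hS
  have hSpc : IsPathConnected S := by
    refine IsPathConnected.image' ?_ (hψcont.mono ?_)
    · exact (convex_ball y₀ r).isPathConnected ⟨y₀, Metric.mem_ball_self hrpos⟩
    · exact fun z hz => (hball hz).2
  have hg₀S : g₀ ∈ S := ⟨y₀, Metric.mem_ball_self hrpos, rfl⟩
  have hSu' : S ⊆ u' := by
    rintro - ⟨z, hz, rfl⟩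
    exact (hball hz).1
  have hSnhds : S ∈ nhds g₀ := by
    have hopen : IsOpen (e.source ∩ φ ⁻¹' Metric.ball y₀ r) :=
      hφcont.isOpen_inter_preimage e.open_source Metric.isOpen_ball
    have hmem' : g₀ ∈ e.source ∩ φ ⁻¹' Metric.ball y₀ r :=
      ⟨hg₀src, by rw [mem_preimage, hφg₀]; exact Metric.mem_ball_self hrpos⟩
    refine Filter.mem_of_superset (hopen.mem_nhds hmem') ?_
    rintro w ⟨hwsrc, hwb⟩
    exact ⟨φ w, hwb, hψφ w hwsrc⟩
  -- translate to g
  have hτS : τ '' S ∈ nhds g := by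
    rw [← hτg₀]
    exact τ.isOpenMap.image_mem_nhds hSnhds
  have hτSpc : IsPathConnected (τ '' S) := hSpc.image τ.continuous
  have hτSu : τ '' S ⊆ u := by
    rintro - ⟨z, hz, rfl⟩
    exact hSu' hz
  have hgτS : g ∈ τ '' S := ⟨g₀, hg₀S, hτg₀⟩
  exact Filter.mem_of_superset hτS (hτSpc.subset_pathComponentIn hgτS hτSu)

end LPC

namespace WEP

variable {G : Type*} [Group G] {U : Set G} [TopologicalSpace G] [IsTopologicalGroup G]

theorem letters_to_chain (hU : IsOpen U) (h1U : (1:G) ∈ U)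
    (hjoin : ∀ g ∈ U, JoinedIn U 1 g) (l : List G) (hl : ∀ x ∈ l, x ∈ U) :
    ∃ Ψ : List (ℝ → G),
      (∀ ψ ∈ Ψ, Continuous ψ) ∧ (∀ ψ ∈ Ψ, ∀ t ≤ 0, ψ t = 1) ∧
      (∀ ψ ∈ Ψ, ∀ t ≥ 1, ψ t = ψ 1) ∧
      Ψ.map (fun ψ => ψ 1) = l ∧
      ∃ N₀ : ℕ, ∀ n ≥ N₀, n ≠ 0 → ∀ ψ ∈ Ψ, WordEquiv U [ψ 1] (wordN ψ n n) := by
  induction l with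
  | nil => exact ⟨[], by simp, by simp, by simp, by simp, 0, fun n _ _ ψ hψ => by simp at hψ⟩
  | cons g l' ih =>
    obtain ⟨Ψ', hc', h0', h1', hmap', N₀', hper'⟩ := ih (fun x hx => hl x (by simp [hx]))
    obtain ⟨γ, hγ⟩ := hjoin g (hl g (by simp))
    set ψ : ℝ → G := ⇑γ.extend with hψdef
    have hψc : Continuous ψ := γ.continuous_extend
    have hψ0 : ∀ t ≤ 0, ψ t = 1 := by
      intro t ht
      rw [hψdef, γ.extend_of_le_zero ht]
    have hψ1 : ∀ t ≥ 1, ψ t = ψ 1 := by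
      intro t ht
      rw [hψdef, γ.extend_of_one_le ht, γ.extend_of_one_le le_rfl]
    have hψone : ψ 1 = g := by
      rw [hψdef, γ.extend_one]
    obtain ⟨N₁, hrows⟩ := homotopy_rows (Path.Homotopy.refl γ) hU h1U
    refine ⟨ψ :: Ψ', ?_, ?_, ?_, ?_, max N₀' N₁, ?_⟩
    · intro φ hφ
      rcases List.mem_cons.mp hφ with rfl | hφ
      · exact hψc
      · exact hc' φ hφ
    · intro φ hφ
      rcases List.mem_cons.mp hφ with rfl | hφ
      · exact hψ0
      · exact h0' φ hφ
    · intro φ hφ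
      rcases List.mem_cons.mp hφ with rfl | hφ
      · exact hψ1
      · exact h1' φ hφ
    · rw [List.map_cons, hmap', hψone]
    · intro n hn hn0 φ hφ
      rcases List.mem_cons.mp hφ with rfl | hφ
      · -- the new letter
        have hmem : ∀ w ∈ wordN ψ n n, w ∈ U := (hrows n (le_of_max_le_right hn) hn0).2
        have hin : ∀ j : ℕ, j ≤ n → ψ ((j:ℝ) / n) ∈ U := by
          intro j _
          exact hγ (Set.projIcc 0 1 zero_le_one _)
        have := wordN_equiv_singleton ψ n n hn0 (by
          rw [hψdef, γ.extend_zero]) hmem hin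
        have hend : ψ ((n:ℝ)/n) = ψ 1 := by
          rw [div_self (by exact_mod_cast hn0 : (n:ℝ) ≠ 0)]
        rw [hend] at this
        exact wordEquiv_symm this
      · exact hper' n (le_of_max_le_left hn) hn0 φ hφ

theorem main_word_equiv (hUopen : IsOpen U) (h1U : (1:G) ∈ U)
    (hjoin : ∀ g ∈ U, JoinedIn U 1 g) [SimplyConnectedSpace G]
    (l : List G) (hl : l ≠ []) (hlU : ∀ x ∈ l, x ∈ U) (hprod : l.prod ∈ U) :
    WordEquiv U l [l.prod] := by
  obtain ⟨Ψ, hcont, h0, h1, hmap, N₀, hper⟩ := letters_to_chain hUopen h1U hjoin l hlU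
  set m := Ψ.length with hm
  have hlen : m = l.length := by rw [hm, ← hmap]; simp
  have hm0 : m ≠ 0 := by
    rw [hlen]
    simpa using hl
  have hmR : (0:ℝ) < m := by positivity
  -- the concatenated path
  have hsource : chain Ψ ((m:ℝ) * ((0 : unitInterval) : ℝ)) = 1 := by
    have : ((0 : unitInterval) : ℝ) = 0 := rfl
    rw [this, mul_zero]
    exact chain_nonpos Ψ h0 0 le_rfl
  have htarget : chain Ψ ((m:ℝ) * ((1 : unitInterval) : ℝ)) = l.prod := by
    have : ((1 : unitInterval) : ℝ) = 1 := rfl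
    rw [this, mul_one, chain_of_ge Ψ h1 m le_rfl, hmap]
  set γ : Path (1:G) l.prod :=
    { toFun := fun t => chain Ψ ((m:ℝ) * t),
      continuous_toFun := (chain_continuous Ψ hcont).comp
        (continuous_const.mul continuous_subtype_val),
      source' := hsource,
      target' := htarget } with hγdef
  have hγext : ∀ t : ℝ, 0 ≤ t → t ≤ 1 → γ.extend t = chain Ψ ((m:ℝ) * t) := by
    intro t h0t ht1
    rw [Path.extend_apply γ ⟨h0t, ht1⟩]
    rfl
  obtain ⟨σ, hσ⟩ := hjoin l.prod hprod
  obtain ⟨F⟩ := SimplyConnectedSpace.paths_homotopic γ σ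
  obtain ⟨N₁, hrows⟩ := homotopy_rows F hUopen h1U
  set n : ℕ := N₀ + N₁ + 1 with hn
  have hn0 : n ≠ 0 := by omega
  have hnN₀ : n ≥ N₀ := by omega
  set N : ℕ := n * m with hN
  have hN0 : N ≠ 0 := by
    simp [hN, hn0, hm0]
  have hNN₁ : N ≥ N₁ := by
    calc N₁ ≤ n := by omega
    _ = n * 1 := by ring
    _ ≤ n * m := Nat.mul_le_mul_left n (by omega)
  have hNR : (0:ℝ) < N := by positivity
  have hnR : (0:ℝ) < n := by positivity
  -- step 1 : l  ~  word of the chain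
  have e1 : WordEquiv U l (wordN (chain Ψ) n N) := by
    rw [← hmap, hN]
    exact word_equiv_chain h1U Ψ n hn0 h0 h1 (fun ψ hψ => hper n hnN₀ hn0 ψ hψ)
  -- step 2 : word of the chain = word of γ.extend
  have key : ∀ i : ℕ, i ≤ N → γ.extend ((i:ℝ)/N) = chain Ψ ((i:ℝ)/n) := by
    intro i hi
    have hi0 : (0:ℝ) ≤ (i:ℝ)/N := by positivity
    have hi1 : (i:ℝ)/N ≤ 1 := by
      rw [div_le_one hNR]
      exact_mod_cast hi
    rw [hγext _ hi0 hi1]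
    congr 1
    rw [hN]
    push_cast
    field_simp
  have e2 : wordN (chain Ψ) n N = wordN γ.extend N N := by
    unfold wordN
    refine List.map_congr_left ?_
    intro j hj
    rw [List.mem_range] at hj
    have k1 := key j (le_of_lt hj)
    have k2 := key (j+1) hj
    rw [show ((j+1:ℕ):ℝ) = (j:ℝ)+1 by push_cast; ring] at k2
    rw [k1, k2]
  -- step 3 : homotopy between the rows
  have e3 : WordEquiv U (wordN γ.extend N N) (wordN σ.extend N N) := (hrows N hNN₁ hN0).1
  -- step 4 : contract the word of σ
  have e4 : WordEquiv U (wordN σ.extend N N) [l.prod] := by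
    have hmem : ∀ w ∈ wordN σ.extend N N, w ∈ U := (hrows N hNN₁ hN0).2
    have hin : ∀ j : ℕ, j ≤ N → σ.extend ((j:ℝ) / N) ∈ U := by
      intro j _
      exact hσ (Set.projIcc 0 1 zero_le_one _)
    have := wordN_equiv_singleton σ.extend N N hN0 (by rw [σ.extend_zero]) hmem hin
    have hend : σ.extend ((N:ℝ)/N) = l.prod := by
      rw [div_self (ne_of_gt hNR), σ.extend_one]
    rwa [hend] at this
  exact wordEquiv_trans e1 (wordEquiv_trans (e2 ▸ wordEquiv_refl _)
    (wordEquiv_trans e3 e4))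

end WEP

/-- **Words over an open connected neighborhood of `1` in a simply connected Lie group
contract to their product.**
Let `G` be a simply connected Lie group and `U ⊆ G` an open connected subset containing `1`.
If `g₁, …, gₙ ∈ U` are such that `g = g₁ * ⋯ * gₙ ∈ U`, then the `U`-words `(g₁, …, gₙ)` and
`(g)` are equivalent. -/
theorem word_equiv_prod_of_simplyConnected
    {E : Type*} [NormedAddCommGroup E] [NormedSpace ℝ E]
    {H : Type*} [TopologicalSpace H] (I : ModelWithCorners ℝ E H)
    {G : Type*} [TopologicalSpace G] [ChartedSpace H G] [Group G] [LieGroup I (⊤ : ℕ∞) G]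
    [SimplyConnectedSpace G]
    (U : Set G) (hUopen : IsOpen U) (hUconn : IsConnected U) (h1U : (1 : G) ∈ U)
    (l : List G) (hl : l ≠ []) (hlU : ∀ x ∈ l, x ∈ U) (hprod : l.prod ∈ U) :
    WordEquiv U l [l.prod] := by
  letI : IsTopologicalGroup G := topologicalGroup_of_lieGroup I (⊤ : ℕ∞)
  letI : LocallyPathConnectedSpace G := lpc_of_chartedSpace I
  have hpc : IsPathConnected U := hUopen.isConnected_iff_isPathConnected.mp hUconn
  exact WEP.main_word_equiv hUopen h1U (fun g hg => hpc.joinedIn 1 h1U g hg) l hl hlU hprod
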